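/- Let G ∈ ℝ^{N×N}, t₀ > 0, and let q : [t₀, ∞) → ℝ^N satisfy the NAGD game dynamics q''(t) + (3/t) q'(t) + G q(t) = 0. Let w ∈ ℝ^N be a nonzero vector in the left null space of G, i.e. Gᵀw = 0. Define y₁(t) = wᵀ q(t) and y₂(t) = wᵀ q'(t). Then for all t ≥ t₀: y₂(t) = (t₀/t)³ y₂(t₀), and y₁(t) → y₁(t₀) + (t₀/2) y₂(t₀) as t → ∞. -/

import Mathlib

open Filter

/-- NAGD game dynamics: `q` is a twice continuously differentiable trajectory with
velocity `v = q'` satisfying `q'' + (3/t) q' + G q = 0` on `[t₀, ∞)`. -/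
def IsNAGDTrajectory {N : ℕ} (G : Matrix (Fin N) (Fin N) ℝ) (t₀ : ℝ)
    (q v : ℝ → Fin N → ℝ) : Prop :=
  (∀ t, t₀ ≤ t → HasDerivAt q (v t) t) ∧
  (∀ t, t₀ ≤ t → HasDerivAt v (-(3 / t) • v t - G.mulVec (q t)) t)

lemma dot_hasDerivAt {N : ℕ} (w : Fin N → ℝ) {f : ℝ → Fin N → ℝ} {f' : Fin N → ℝ} {t : ℝ}
    (h : HasDerivAt f f' t) :
    HasDerivAt (fun s => dotProduct w (f s)) (dotProduct w f') t := by
  simp only [dotProduct]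
  exact HasDerivAt.fun_sum fun i _ => (hasDerivAt_pi.mp h i).const_mul (w i)

/-- constancy on `[t₀, ∞)` from vanishing derivative -/
lemma const_of_deriv_zero {f : ℝ → ℝ} {t₀ : ℝ}
    (h : ∀ t, t₀ ≤ t → HasDerivAt f 0 t) : ∀ t, t₀ ≤ t → f t = f t₀ := by
  intro t ht
  refine constant_of_has_deriv_right_zero (fun s hs => (h s hs.1).continuousAt.continuousWithinAt)
    (fun s hs => ((h s hs.1).hasDerivWithinAt)) t ⟨ht, le_refl t⟩

/-- if `w ≠ 0` is in the left null space of `G` (`Gᵀ w = 0`), then along any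
NAGD trajectory, `y₂(t) = wᵀ q'(t)` satisfies `y₂(t) = (t₀/t)³ y₂(t₀)` and
`y₁(t) = wᵀ q(t)` converges to `y₁(t₀) + (t₀/2) y₂(t₀)`. -/
theorem stmt_5 {N : ℕ} (G : Matrix (Fin N) (Fin N) ℝ) (t₀ : ℝ) (ht₀ : 0 < t₀)
    (q v : ℝ → Fin N → ℝ) (htraj : IsNAGDTrajectory G t₀ q v)
    (w : Fin N → ℝ) (hw : w ≠ 0) (hnull : G.transpose.mulVec w = 0) :
    (∀ t, t₀ ≤ t →
      dotProduct w (v t) = (t₀ / t) ^ 3 * dotProduct w (v t₀)) ∧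
    Tendsto (fun t => dotProduct w (q t)) atTop
      (nhds (dotProduct w (q t₀) + t₀ / 2 * dotProduct w (v t₀))) := by
  obtain ⟨hq, hv⟩ := htraj
  set y1 : ℝ → ℝ := fun t => dotProduct w (q t) with hy1
  set y2 : ℝ → ℝ := fun t => dotProduct w (v t) with hy2
  have hpos : ∀ t, t₀ ≤ t → (0:ℝ) < t := fun t ht => lt_of_lt_of_le ht₀ ht
  -- derivative of y1
  have hdy1 : ∀ t, t₀ ≤ t → HasDerivAt y1 (y2 t) t := fun t ht => dot_hasDerivAt w (hq t ht)
  -- derivative of y2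
  have hdy2 : ∀ t, t₀ ≤ t → HasDerivAt y2 (-(3 / t) * y2 t) t := by
    intro t ht
    have h := dot_hasDerivAt w (hv t ht)
    have hz : dotProduct w (G.mulVec (q t)) = 0 := by
      rw [Matrix.dotProduct_mulVec, ← Matrix.mulVec_transpose, hnull, zero_dotProduct]
    have : dotProduct w (-(3 / t) • v t - G.mulVec (q t)) = -(3 / t) * y2 t := by
      rw [dotProduct_sub, dotProduct_smul, hz, sub_zero, smul_eq_mul]
    rwa [this] at h
  -- y2 satisfies the closed form
  have hy2form : ∀ t, t₀ ≤ t → y2 t = (t₀ / t) ^ 3 * y2 t₀ := by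
    have hconst : ∀ t, t₀ ≤ t → t ^ 3 * y2 t = t₀ ^ 3 * y2 t₀ := by
      apply const_of_deriv_zero
      intro t ht
      have htne : t ≠ 0 := (hpos t ht).ne'
      have h := (hasDerivAt_pow 3 t).mul (hdy2 t ht)
      convert h using 1
      · rfl
      · rfl
      · rfl
      field_simp
      ring
    intro t ht
    have htne : t ≠ 0 := (hpos t ht).ne'
    have h := hconst t ht
    field_simp
    linarith [h]
  constructor
  · exact hy2form
  -- limit of y1
  set C : ℝ := t₀ ^ 3 * y2 t₀ with hC
  have hy1form : ∀ t, t₀ ≤ t → y1 t + C / (2 * t ^ 2) = y1 t₀ + C / (2 * t₀ ^ 2) := by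
    apply const_of_deriv_zero
    intro t ht
    have htne : t ≠ 0 := (hpos t ht).ne'
    have h2 : HasDerivAt (fun s => C / (2 * s ^ 2)) (-C / t ^ 3) t := by
      have hp : HasDerivAt (fun s : ℝ => (s ^ 2)⁻¹) (-(2 * t ^ 1) / (t ^ 2) ^ 2) t :=
        (hasDerivAt_pow 2 t).inv (pow_ne_zero 2 htne)
      have h' := hp.const_mul (C / 2)
      have heq : (fun s : ℝ => C / (2 * s ^ 2)) = fun s : ℝ => C / 2 * (s ^ 2)⁻¹ := by
        funext s; field_simp
      rw [heq]
      convert h' using 1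
      · rfl
      · rfl
      field_simp
    have h := (hdy1 t ht).add h2
    have : y2 t + -C / t ^ 3 = 0 := by
      rw [hy2form t ht, hC]
      field_simp
      ring
    rwa [this] at h
  have hL : y1 t₀ + C / (2 * t₀ ^ 2) = y1 t₀ + t₀ / 2 * y2 t₀ := by
    rw [hC]; field_simp
  have hlim : Tendsto (fun t => y1 t₀ + t₀ / 2 * y2 t₀ - C / (2 * t ^ 2)) atTop
      (nhds (y1 t₀ + t₀ / 2 * y2 t₀)) := by
    have h0 : Tendsto (fun t : ℝ => C / (2 * t ^ 2)) atTop (nhds 0) := by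
      have ht2 : Tendsto (fun t : ℝ => 2 * t ^ 2) atTop atTop :=
        (tendsto_pow_atTop (by norm_num : 2 ≠ 0)).const_mul_atTop (by norm_num)
      exact Tendsto.div_atTop tendsto_const_nhds ht2
    simpa using tendsto_const_nhds.sub h0
  refine hlim.congr' ?_
  filter_upwards [eventually_ge_atTop t₀] with t ht
  have := hy1form t ht
  rw [hL] at this
  linarith [this]
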